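/- Under (q, ξ)-constant-expansion, if a classifier G satisfies R_B(G) < ξ and min_i P({x : G(x) = i}) > 2·max{q, R_B(G)}, then for every predicted class j there exists a ground-truth class i such that P(S_B(G) ∩ C_i ∩ Ĉ_j) > P(S_B(G) ∩ C_i)/2, where Ĉ_j = {x : G(x) = j}. -/
import Mathlib


open MeasureTheory Set ProbabilityTheory

noncomputable def pr {X : Type*} [MeasurableSpace X] (P : Measure X) (S : Set X) : ℝ :=
  (P S).toReal

def nbhd {X : Type*} (B : X → Set X) (S : Set X) : Set X :=
  {x' | ∃ x ∈ S, (B x ∩ B x').Nonempty}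

def cls {X : Type*} {K : ℕ} (Gstar : X → Fin K) (i : Fin K) : Set X := {x | Gstar x = i}

def nstar {X : Type*} {K : ℕ} (B : X → Set X) (Gstar : X → Fin K) (S : Set X) : Set X :=
  ⋃ i, nbhd B (S ∩ cls Gstar i) ∩ cls Gstar i

def robustSet {X : Type*} {K : ℕ} (B : X → Set X) (G : X → Fin K) : Set X :=
  {x | ∀ x' ∈ B x, G x' = G x}

def mset {X : Type*} {K : ℕ} (Gstar G : X → Fin K) : Set X := {x | G x ≠ Gstar x}

lemma pr_mono {X : Type*} [MeasurableSpace X] (P : Measure X) [IsProbabilityMeasure P]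
    {A C : Set X} (h : A ⊆ C) : pr P A ≤ pr P C :=
  ENNReal.toReal_mono (measure_ne_top P C) (measure_mono h)

lemma pr_union_le {X : Type*} [MeasurableSpace X] (P : Measure X) [IsProbabilityMeasure P]
    (A C : Set X) : pr P (A ∪ C) ≤ pr P A + pr P C := by
  have h := measure_union_le (μ := P) A C
  calc pr P (A ∪ C) ≤ (P A + P C).toReal :=
        ENNReal.toReal_mono (by finiteness) h
    _ = pr P A + pr P C := ENNReal.toReal_add (measure_ne_top _ _) (measure_ne_top _ _)

theorem stmt7 {X : Type*} [MeasurableSpace X] {K : ℕ}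
    (P : Measure X) [IsProbabilityMeasure P]
    (B : X → Set X) (hB : ∀ x, x ∈ B x)
    (Gstar G : X → Fin K) (q ξ : ℝ)
    (hexp : ∀ S : Set X, pr P S ≥ q →
      (∀ i, pr P (S ∩ cls Gstar i) ≤ pr P (cls Gstar i) / 2) →
      pr P (nstar B Gstar S \ S) ≥ min ξ (pr P S))
    (hRB : pr P {x | ∃ x' ∈ B x, G x' ≠ G x} < ξ)
    (hmin : ∀ j : Fin K,
      pr P {x | G x = j} > 2 * max q (pr P {x | ∃ x' ∈ B x, G x' ≠ G x})) :
    ∀ j : Fin K, ∃ i : Fin K,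
      pr P (robustSet B G ∩ cls Gstar i ∩ {x | G x = j}) >
        pr P (robustSet B G ∩ cls Gstar i) / 2 := by
  intro j
  by_contra hcon
  push_neg at hcon
  set R := pr P {x | ∃ x' ∈ B x, G x' ≠ G x} with hRdef
  set S := robustSet B G ∩ {x | G x = j} with hSdef
  have hcompl : {x : X | G x = j} ⊆ S ∪ {x | ∃ x' ∈ B x, G x' ≠ G x} := by
    intro x hx
    by_cases hx' : ∀ x' ∈ B x, G x' = G x
    · exact Or.inl ⟨hx', hx⟩
    · right; push_neg at hx'; exact hx'
  have hSge : pr P S ≥ pr P {x | G x = j} - R := by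
    have h := (pr_mono P hcompl).trans (pr_union_le P _ _)
    linarith
  have hmaxlt : max q R < pr P S := by
    have h1 := hmin j
    have h2 : R ≤ max q R := le_max_right _ _
    linarith
  have hq : pr P S ≥ q := le_trans (le_max_left _ _) hmaxlt.le
  have hcond : ∀ i, pr P (S ∩ cls Gstar i) ≤ pr P (cls Gstar i) / 2 := by
    intro i
    have heq : S ∩ cls Gstar i = robustSet B G ∩ cls Gstar i ∩ {x | G x = j} := by
      ext x
      simp only [hSdef, mem_inter_iff, mem_setOf_eq]
      tauto
    rw [heq]
    have h1 := hcon i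
    have h2 := pr_mono P (inter_subset_right :
      robustSet B G ∩ cls Gstar i ⊆ cls Gstar i)
    linarith
  have hexp' := hexp S hq hcond
  have hsub : nstar B Gstar S \ S ⊆ {x | ∃ x' ∈ B x, G x' ≠ G x} := by
    intro x hx
    by_contra hrob
    simp only [mem_setOf_eq, not_exists, not_and, not_not] at hrob
    obtain ⟨hxn, hxS⟩ := hx
    simp only [nstar, mem_iUnion] at hxn
    obtain ⟨i, hxi⟩ := hxn
    obtain ⟨⟨z, hzS, y, hy⟩, _⟩ := hxi
    apply hxS
    have hzrob : ∀ x' ∈ B z, G x' = G z := hzS.1.1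
    have hzj : G z = j := hzS.1.2
    have hxj : G x = j := by
      have h1 : G y = G z := hzrob y hy.1
      have h2 : G y = G x := hrob y hy.2
      rw [← h2, h1, hzj]
    exact ⟨fun x' hx' => hrob x' hx', hxj⟩
  have hle : pr P (nstar B Gstar S \ S) ≤ R := pr_mono P hsub
  have hmin' : min ξ (pr P S) > R :=
    lt_min hRB (lt_of_le_of_lt (le_max_right _ _) hmaxlt)
  linarith
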